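/- Given the forward interpolations x_t = a_t x0 + b_t xT + c_t m + s_t ε_t and x_{t-1} = a_{t-1} x0 + b_{t-1} xT + c_{t-1} m + s_{t-1} ε_{t-1} with independent standard Gaussians, eliminating x0 gives x_t = (a_t/a_{t-1}) x_{t-1} + (b_t - b_{t-1} a_t/a_{t-1}) xT + (c_t - c_{t-1} a_t/a_{t-1}) m + √(s_t² - s_{t-1}² a_t²/a_{t-1}²) ε, provided a_{t-1} ≠ 0 and s_t² ≥ s_{t-1}² a_t²/a_{t-1}²; i.e. the conditional distribution of x_t given x_{t-1}, xT is Gaussian with this mean and variance. -/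

import Mathlib

open MeasureTheory ProbabilityTheory Real
open scoped ENNReal NNReal

namespace ForwardElim

lemma gaussianPDFReal_le (v : ℝ≥0) (x : ℝ) :
    gaussianPDFReal 0 v x ≤ (Real.sqrt (2 * π * v))⁻¹ := by
  rw [gaussianPDFReal]
  have h1 : rexp (-(x - 0) ^ 2 / (2 * v)) ≤ 1 := by
    rw [Real.exp_le_one_iff]
    have hv : (0:ℝ) ≤ 2 * v := by positivity
    exact div_nonpos_of_nonpos_of_nonneg (neg_nonpos_of_nonneg (sq_nonneg _)) hv
  calc (√(2 * π * v))⁻¹ * rexp (-(x - 0) ^ 2 / (2 * v))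
      ≤ (√(2 * π * v))⁻¹ * 1 := by
        apply mul_le_mul_of_nonneg_left h1 (by positivity)
    _ = (√(2 * π * v))⁻¹ := mul_one _

lemma key_integral {v1 v2 : ℝ≥0} (h1 : v1 ≠ 0) (h2 : v2 ≠ 0) (x : ℝ) :
    ∫ y, gaussianPDFReal 0 v1 (x - y) * gaussianPDFReal 0 v2 y
      = gaussianPDFReal 0 (v1 + v2) x := by
  have hw1 : (0:ℝ) < v1 := by exact_mod_cast pos_iff_ne_zero.mpr h1
  have hw2 : (0:ℝ) < v2 := by exact_mod_cast pos_iff_ne_zero.mpr h2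
  have hπ := Real.pi_pos
  set w1 := (v1:ℝ)
  set w2 := (v2:ℝ)
  have hA : (0:ℝ) < (w1 + w2) / (2 * w1 * w2) := by positivity
  set A := (w1 + w2) / (2 * w1 * w2) with hAdef
  set c := w2 * x / (w1 + w2) with hcdef
  have hpt : ∀ y, gaussianPDFReal 0 v1 (x - y) * gaussianPDFReal 0 v2 y
      = ((√(2 * π * w1))⁻¹ * (√(2 * π * w2))⁻¹ * rexp (-x ^ 2 / (2 * (w1 + w2))))
          * rexp (-A * (y - c) ^ 2) := by
    intro y
    rw [gaussianPDFReal, gaussianPDFReal, sub_zero, sub_zero]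
    have hexp : -(x - y) ^ 2 / (2 * w1) + -y ^ 2 / (2 * w2)
        = -x ^ 2 / (2 * (w1 + w2)) + -A * (y - c) ^ 2 := by
      rw [hAdef, hcdef]
      field_simp
      ring
    calc (√(2 * π * w1))⁻¹ * rexp (-(x - y) ^ 2 / (2 * w1))
          * ((√(2 * π * w2))⁻¹ * rexp (-y ^ 2 / (2 * w2)))
        = (√(2 * π * w1))⁻¹ * (√(2 * π * w2))⁻¹
            * rexp (-(x - y) ^ 2 / (2 * w1) + -y ^ 2 / (2 * w2)) := by
          rw [Real.exp_add]; ring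
      _ = _ := by rw [hexp, Real.exp_add]; ring
  simp only [hpt]
  rw [MeasureTheory.integral_const_mul]
  have hshift : ∫ y, rexp (-A * (y - c) ^ 2) = √(π / A) := by
    rw [integral_sub_right_eq_self (fun y => rexp (-A * y ^ 2)) c, integral_gaussian]
  rw [hshift]
  rw [gaussianPDFReal, sub_zero]
  have hcoe : ((v1 + v2 : ℝ≥0) : ℝ) = w1 + w2 := by push_cast; ring
  rw [hcoe]
  have hconst : (√(2 * π * w1))⁻¹ * (√(2 * π * w2))⁻¹ * √(π / A)
      = (√(2 * π * (w1 + w2)))⁻¹ := by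
    have hπA : π / A = (2 * π * w1) * (2 * π * w2) / (2 * π * (w1 + w2)) := by
      rw [hAdef]; field_simp
    rw [hπA, Real.sqrt_div (by positivity), Real.sqrt_mul (x := 2 * π * w1) (by positivity)]
    have s1 : (0:ℝ) < √(2 * π * w1) := Real.sqrt_pos.mpr (by positivity)
    have s2 : (0:ℝ) < √(2 * π * w2) := Real.sqrt_pos.mpr (by positivity)
    have s3 : (0:ℝ) < √(2 * π * (w1 + w2)) := Real.sqrt_pos.mpr (by positivity)
    field_simp
  calc (√(2 * π * w1))⁻¹ * (√(2 * π * w2))⁻¹ * rexp (-x ^ 2 / (2 * (w1 + w2))) * √(π / A)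
      = ((√(2 * π * w1))⁻¹ * (√(2 * π * w2))⁻¹ * √(π / A)) * rexp (-x ^ 2 / (2 * (w1 + w2))) := by
        ring
    _ = _ := by rw [hconst]

lemma key_lintegral {v1 v2 : ℝ≥0} (h1 : v1 ≠ 0) (h2 : v2 ≠ 0) (x : ℝ) :
    ∫⁻ y, gaussianPDF 0 v1 (x - y) * gaussianPDF 0 v2 y = gaussianPDF 0 (v1 + v2) x := by
  have hint : Integrable (fun y => gaussianPDFReal 0 v1 (x - y) * gaussianPDFReal 0 v2 y) := by
    apply Integrable.bdd_mul (c := (Real.sqrt (2 * π * v1))⁻¹) (integrable_gaussianPDFReal 0 v2)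
    · exact ((measurable_gaussianPDFReal 0 v1).comp
        (measurable_const.sub measurable_id)).aestronglyMeasurable
    · exact ae_of_all _ fun y => by
        rw [Real.norm_eq_abs, abs_of_nonneg (gaussianPDFReal_nonneg _ _ _)]
        exact gaussianPDFReal_le v1 _
  have hmul : ∀ y, gaussianPDF 0 v1 (x - y) * gaussianPDF 0 v2 y
      = ENNReal.ofReal (gaussianPDFReal 0 v1 (x - y) * gaussianPDFReal 0 v2 y) := fun y =>
    (ENNReal.ofReal_mul (gaussianPDFReal_nonneg _ _ _)).symm
  simp_rw [hmul]
  rw [← ofReal_integral_eq_lintegral_ofReal hint (ae_of_all _ fun y =>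
        mul_nonneg (gaussianPDFReal_nonneg _ _ _) (gaussianPDFReal_nonneg _ _ _)),
    key_integral h1 h2]
  rfl

lemma gaussianReal_add_conv (v1 v2 : ℝ≥0) :
    ((gaussianReal 0 v1).prod (gaussianReal 0 v2)).map (fun p : ℝ × ℝ => p.1 + p.2)
      = gaussianReal 0 (v1 + v2) := by
  rcases eq_or_ne v1 0 with rfl | h1
  · show (gaussianReal 0 0).conv (gaussianReal 0 v2) = _
    rw [gaussianReal_zero_var, Measure.dirac_zero_conv, zero_add]
  rcases eq_or_ne v2 0 with rfl | h2
  · show (gaussianReal 0 v1).conv (gaussianReal 0 0) = _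
    rw [gaussianReal_zero_var, Measure.conv_dirac_zero, add_zero]
  have hf := measurable_gaussianPDF 0 v1
  have hg := measurable_gaussianPDF 0 v2
  have hadd : Measurable (fun p : ℝ × ℝ => p.1 + p.2) := measurable_fst.add measurable_snd
  ext s hs
  rw [Measure.map_apply hadd hs, Measure.prod_apply (hadd hs)]
  set I : ℝ → ℝ≥0∞ := s.indicator 1 with hI
  have hImeas : Measurable I := measurable_one.indicator hs
  have hν : ∀ x : ℝ, gaussianReal 0 v2 (Prod.mk x ⁻¹' ((fun p : ℝ × ℝ => p.1 + p.2) ⁻¹' s))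
      = ∫⁻ y, I (x + y) * gaussianPDF 0 v2 y := by
    intro x
    have hpre : (Prod.mk x ⁻¹' ((fun p : ℝ × ℝ => p.1 + p.2) ⁻¹' s))
        = (fun y => x + y) ⁻¹' s := rfl
    have hpm : MeasurableSet ((fun y => x + y) ⁻¹' s) := (measurable_const_add x) hs
    rw [hpre, gaussianReal_of_var_ne_zero _ h2, withDensity_apply _ hpm,
      ← lintegral_indicator hpm]
    refine lintegral_congr fun y => ?_
    by_cases hy : x + y ∈ s <;>
      simp [hI, Set.indicator_apply, Set.mem_preimage, hy]
  simp_rw [hν]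
  have hg0 : Measurable fun x => ∫⁻ y, I (x + y) * gaussianPDF 0 v2 y := by
    apply Measurable.lintegral_prod_right'
      (f := fun p : ℝ × ℝ => I (p.1 + p.2) * gaussianPDF 0 v2 p.2)
    exact (hImeas.comp (measurable_fst.add measurable_snd)).mul (hg.comp measurable_snd)
  rw [gaussianReal_of_var_ne_zero _ h1,
    lintegral_withDensity_eq_lintegral_mul _ hf hg0]
  have hmeas1 : Measurable (Function.uncurry fun x y =>
      gaussianPDF 0 v1 x * (I (x + y) * gaussianPDF 0 v2 y)) := by
    apply (hf.comp measurable_fst).mul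
    exact (hImeas.comp (measurable_fst.add measurable_snd)).mul (hg.comp measurable_snd)
  have hstep1 : ∫⁻ x, (gaussianPDF 0 v1 * fun x => ∫⁻ y, I (x + y) * gaussianPDF 0 v2 y) x
      = ∫⁻ y, ∫⁻ x, gaussianPDF 0 v1 x * (I (x + y) * gaussianPDF 0 v2 y) := by
    rw [← lintegral_lintegral_swap hmeas1.aemeasurable]
    refine lintegral_congr fun x => ?_
    simp only [Pi.mul_apply]
    have hGm : Measurable fun y => I (x + y) * gaussianPDF 0 v2 y :=
      (hImeas.comp (measurable_const_add x)).mul hg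
    rw [← lintegral_const_mul _ hGm]
  rw [hstep1]
  have hshift : ∀ y, (∫⁻ x, gaussianPDF 0 v1 x * (I (x + y) * gaussianPDF 0 v2 y))
      = ∫⁻ x, gaussianPDF 0 v1 (x - y) * (I x * gaussianPDF 0 v2 y) := by
    intro y
    have h := lintegral_add_right_eq_self (μ := (volume : Measure ℝ))
      (fun x => gaussianPDF 0 v1 (x - y) * (I x * gaussianPDF 0 v2 y)) y
    simp only [add_sub_cancel_right] at h
    exact h
  simp_rw [hshift]
  have hmeas2 : Measurable (Function.uncurry fun y x =>
      gaussianPDF 0 v1 (x - y) * (I x * gaussianPDF 0 v2 y)) := by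
    apply (hf.comp (measurable_snd.sub measurable_fst)).mul
    exact (hImeas.comp measurable_snd).mul (hg.comp measurable_fst)
  rw [lintegral_lintegral_swap hmeas2.aemeasurable]
  have hfinal : ∀ x, (∫⁻ y, gaussianPDF 0 v1 (x - y) * (I x * gaussianPDF 0 v2 y))
      = I x * gaussianPDF 0 (v1 + v2) x := by
    intro x
    have : ∀ y, gaussianPDF 0 v1 (x - y) * (I x * gaussianPDF 0 v2 y)
        = I x * (gaussianPDF 0 v1 (x - y) * gaussianPDF 0 v2 y) := fun y => by ring
    simp_rw [this]
    have hGm2 : Measurable fun y => gaussianPDF 0 v1 (x - y) * gaussianPDF 0 v2 y :=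
      (hf.comp (measurable_const.sub measurable_id)).mul hg
    rw [lintegral_const_mul _ hGm2, key_lintegral h1 h2]
  simp_rw [hfinal]
  have h12 : v1 + v2 ≠ 0 := fun h => h1 (by
    have := (add_eq_zero.mp h).1
    exact this)
  rw [gaussianReal_of_var_ne_zero _ h12, withDensity_apply _ hs, ← lintegral_indicator hs]
  refine lintegral_congr fun x => ?_
  by_cases hx : x ∈ s <;> simp [hI, Set.indicator_apply, hx]

lemma map_add_of_indep {Ω : Type*} [MeasureSpace Ω] [IsProbabilityMeasure (ℙ : Measure Ω)]
    {X Y : Ω → ℝ} (hX : Measurable X) (hY : Measurable Y) {v1 v2 : ℝ≥0}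
    (hlX : Measure.map X ℙ = gaussianReal 0 v1) (hlY : Measure.map Y ℙ = gaussianReal 0 v2)
    (hind : IndepFun X Y ℙ) :
    Measure.map (fun ω => X ω + Y ω) ℙ = gaussianReal 0 (v1 + v2) := by
  have hmap := (indepFun_iff_map_prod_eq_prod_map_map hX.aemeasurable hY.aemeasurable).mp hind
  have hcomp : (fun ω => X ω + Y ω)
      = (fun p : ℝ × ℝ => p.1 + p.2) ∘ fun ω => (X ω, Y ω) := rfl
  rw [hcomp, ← Measure.map_map (g := fun p : ℝ × ℝ => p.1 + p.2) (measurable_fst.add measurable_snd) (hX.prodMk hY), hmap,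
    hlX, hlY, gaussianReal_add_conv]

lemma map_const_mul {Ω : Type*} [MeasureSpace Ω] {X : Ω → ℝ} (hX : Measurable X)
    {μv : ℝ} {v : ℝ≥0} (h : Measure.map X ℙ = gaussianReal μv v) (c : ℝ) :
    Measure.map (fun ω => c * X ω) ℙ
      = gaussianReal (c * μv) (.mk (c ^ 2) (sq_nonneg c) * v) := by
  have hcomp : (fun ω => c * X ω) = (fun x : ℝ => c * x) ∘ X := rfl
  rw [hcomp, ← Measure.map_map (by fun_prop : Measurable fun x : ℝ => c * x) hX, h,
    gaussianReal_map_const_mul]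

lemma map_const_add {Ω : Type*} [MeasureSpace Ω] {X : Ω → ℝ} (hX : Measurable X)
    {μv : ℝ} {v : ℝ≥0} (h : Measure.map X ℙ = gaussianReal μv v) (y : ℝ) :
    Measure.map (fun ω => y + X ω) ℙ = gaussianReal (μv + y) v := by
  have hcomp : (fun ω => y + X ω) = (fun x : ℝ => y + x) ∘ X := rfl
  rw [hcomp, ← Measure.map_map (measurable_const_add y) hX, h, gaussianReal_map_const_add]

end ForwardElim

/-- Eliminating `x0` from the forward interpolations
`x_t = a_t x0 + b_t xT + c_t m + s_t ε_t` and
`x_{t-1} = a_{t-1} x0 + b_{t-1} xT + c_{t-1} m + s_{t-1} ε_{t-1}` gives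
`x_t = (a_t/a_{t-1}) x_{t-1} + (b_t - b_{t-1} a_t/a_{t-1}) xT + (c_t - c_{t-1} a_t/a_{t-1}) m
  + √(s_t² - s_{t-1}² a_t²/a_{t-1}²) ε` in distribution, with `ε` a standard Gaussian
independent of `ε_{t-1}`; i.e. the conditional distribution of `x_t` given `x_{t-1}` (and `xT`)
is Gaussian with this mean and variance. -/
theorem forward_interpolation_eliminate_x0
    {Ω : Type*} [MeasureSpace Ω] [IsProbabilityMeasure (ℙ : Measure Ω)]
    (at_ atm1 bt btm1 ct ctm1 st stm1 : ℝ)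
    (hatm1 : atm1 ≠ 0)
    (hvar : stm1 ^ 2 * at_ ^ 2 / atm1 ^ 2 ≤ st ^ 2)
    (x0 xT m : ℝ)
    (εt εtm1 ε : Ω → ℝ)
    (hmεt : Measurable εt) (hmεtm1 : Measurable εtm1) (hmε : Measurable ε)
    (hlawεt : Measure.map εt ℙ = gaussianReal 0 1)
    (hlawεtm1 : Measure.map εtm1 ℙ = gaussianReal 0 1)
    (hlawε : Measure.map ε ℙ = gaussianReal 0 1)
    (hindep : IndepFun ε εtm1 ℙ)
    (xt xtm1 : Ω → ℝ)
    (hxt : ∀ ω, xt ω = at_ * x0 + bt * xT + ct * m + st * εt ω)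
    (hxtm1 : ∀ ω, xtm1 ω = atm1 * x0 + btm1 * xT + ctm1 * m + stm1 * εtm1 ω) :
    Measure.map (fun ω =>
        (at_ / atm1) * xtm1 ω + (bt - btm1 * (at_ / atm1)) * xT
          + (ct - ctm1 * (at_ / atm1)) * m
          + Real.sqrt (st ^ 2 - stm1 ^ 2 * at_ ^ 2 / atm1 ^ 2) * ε ω) ℙ
      = Measure.map xt ℙ := by
  set σ := Real.sqrt (st ^ 2 - stm1 ^ 2 * at_ ^ 2 / atm1 ^ 2) with hσ
  set k := at_ / atm1 with hk
  set C := at_ * x0 + bt * xT + ct * m with hC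
  -- the LHS random variable rewritten
  have hfun : (fun ω =>
        k * xtm1 ω + (bt - btm1 * k) * xT + (ct - ctm1 * k) * m + σ * ε ω)
      = fun ω => C + (σ * ε ω + (k * stm1) * εtm1 ω) := by
    funext ω
    rw [hxtm1 ω, hC, hk]
    field_simp
    ring
  -- law of the sum of the two independent centered Gaussians
  have hX : Measurable (fun ω => σ * ε ω) := hmε.const_mul σ
  have hY : Measurable (fun ω => (k * stm1) * εtm1 ω) := hmεtm1.const_mul _
  have hlX : Measure.map (fun ω => σ * ε ω) ℙ
      = gaussianReal 0 (.mk (σ ^ 2) (sq_nonneg σ)) := by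
    rw [ForwardElim.map_const_mul hmε hlawε σ, mul_zero, mul_one]
  have hlY : Measure.map (fun ω => (k * stm1) * εtm1 ω) ℙ
      = gaussianReal 0 (.mk ((k * stm1) ^ 2) (sq_nonneg _)) := by
    rw [ForwardElim.map_const_mul hmεtm1 hlawεtm1 (k * stm1), mul_zero, mul_one]
  have hindep' : IndepFun (fun ω => σ * ε ω) (fun ω => (k * stm1) * εtm1 ω) ℙ :=
    hindep.comp (measurable_id.const_mul σ) (measurable_id.const_mul (k * stm1))
  have hsum : Measure.map (fun ω => σ * ε ω + (k * stm1) * εtm1 ω) ℙ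
      = gaussianReal 0 (.mk (st ^ 2) (sq_nonneg st)) := by
    rw [ForwardElim.map_add_of_indep hX hY hlX hlY hindep']
    congr 1
    ext
    push_cast
    rw [hσ, Real.sq_sqrt (sub_nonneg.mpr hvar), hk]
    field_simp
    ring
  have hLHS : Measure.map (fun ω =>
        k * xtm1 ω + (bt - btm1 * k) * xT + (ct - ctm1 * k) * m + σ * ε ω) ℙ
      = gaussianReal C (.mk (st ^ 2) (sq_nonneg st)) := by
    rw [hfun, ForwardElim.map_const_add (X := fun ω => σ * ε ω + (k * stm1) * εtm1 ω) (hX.add hY) hsum C, zero_add]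
  have hRHS : Measure.map xt ℙ = gaussianReal C (.mk (st ^ 2) (sq_nonneg st)) := by
    have hxt' : xt = fun ω => C + st * εt ω := funext hxt
    rw [hxt', ForwardElim.map_const_add (hmεt.const_mul st)
      (by rw [ForwardElim.map_const_mul hmεt hlawεt st, mul_zero, mul_one]) C, zero_add]
  rw [hLHS, hRHS]
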